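/- In the asymmetric product B = T ⋊∘ S of trivial left braces T = T1 × ⋯ × Tn and S = S1 × ⋯ × Sn via a componentwise bilinear map b and an action α where the z-th coordinate of α_{(s1,…,sn)}(t1,…,tn) depends only on s_{z-1} (indices mod n), each subset A_z = {((t1,…,tn),(s1,…,sn)) : t_{z'} = 0 and s_{z'} = 0 for all z' ≠ z} is a left ideal of B whose multiplicative group is abelian, and the additive group of B is the direct sum of the A_z. -/

import Mathlib

/-- In the asymmetric product `B = T ⋊∘ S` of trivial left braces
`T = T₁ × ⋯ × Tₙ`, `S = S₁ × ⋯ × Sₙ` via a componentwise bilinear map `b` and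
an action `α` whose `z`-th coordinate depends only on `s_{z-1}` (indices mod
`n`), each subset `A_z` of elements supported in coordinate `z` is a left
ideal with abelian multiplicative group, and the additive group of `B` is the
direct sum of the `A_z`. -/
theorem stmt16 (n : ℕ) (hn : 1 < n)
    (T S : ZMod n → Type) [∀ z, AddCommGroup (T z)] [∀ z, AddCommGroup (S z)]
    (b : ∀ z, T z → T z → S z)
    (hbl : ∀ z u v w, b z (u + v) w = b z u w + b z v w)
    (hbr : ∀ z u v w, b z u (v + w) = b z u v + b z u w)
    (hbs : ∀ z u v, b z u v = b z v u)
    (f : ∀ z : ZMod n, S (z - 1) → T z → T z)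
    (hfadd : ∀ z s u v, f z s (u + v) = f z s u + f z s v)
    (hfhom : ∀ z s s', f z (s + s') = f z s ∘ f z s')
    (hfzero : ∀ z, f z 0 = id)
    (hfbij : ∀ z s, Function.Bijective (f z s))
    (hforth : ∀ z s u v, b z (f z s u) (f z s v) = b z u v) :
    let B := ((z : ZMod n) → T z) × ((z : ZMod n) → S z)
    let padd : B → B → B := fun x y =>
      (fun z => x.1 z + y.1 z, fun z => x.2 z + y.2 z + b z (x.1 z) (y.1 z))
    let pneg : B → B := fun x =>
      (fun z => -x.1 z, fun z => -x.2 z + b z (x.1 z) (x.1 z))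
    let pmul : B → B → B := fun x y =>
      (fun z => x.1 z + f z (x.2 (z - 1)) (y.1 z), fun z => x.2 z + y.2 z)
    let A : ZMod n → Set B := fun z0 =>
      {x : B | ∀ z, z ≠ z0 → x.1 z = 0 ∧ x.2 z = 0}
    let proj : ZMod n → B → B := fun z0 x =>
      (fun z => if z = z0 then x.1 z else 0, fun z => if z = z0 then x.2 z else 0)
    -- each `A z0` is a left ideal
    (∀ z0, ((fun _ => 0, fun _ => 0) : B) ∈ A z0) ∧
    (∀ z0, ∀ x ∈ A z0, ∀ y ∈ A z0, padd x y ∈ A z0) ∧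
    (∀ z0, ∀ x ∈ A z0, pneg x ∈ A z0) ∧
    (∀ z0 (g : B), ∀ x ∈ A z0, padd (pmul g x) (pneg g) ∈ A z0) ∧
    -- with abelian multiplicative group
    (∀ z0, ∀ x ∈ A z0, ∀ y ∈ A z0, pmul x y = pmul y x) ∧
    -- the additive group of `B` is the direct sum of the `A z0`
    (∀ z0 x, proj z0 x ∈ A z0) ∧
    (∀ z0 x y, proj z0 (padd x y) = padd (proj z0 x) (proj z0 y)) ∧
    Function.Injective (fun (x : B) (z0 : ZMod n) => proj z0 x) ∧
    (∀ c : ZMod n → B, (∀ z0, c z0 ∈ A z0) → ∃ x : B, ∀ z0, proj z0 x = c z0) := by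
  intro B padd pneg pmul A proj
  haveI : Fact (1 < n) := ⟨hn⟩
  -- auxiliary facts
  have hb0l : ∀ z (v : T z), b z 0 v = 0 := by
    intro z v
    have h := hbl z 0 0 v
    rw [add_zero] at h
    exact left_eq_add.mp h
  have hb0r : ∀ z (v : T z), b z v 0 = 0 := fun z v => (hbs z v 0).trans (hb0l z v)
  have hbnegr : ∀ z (u v : T z), b z u (-v) = - b z u v := by
    intro z u v
    have h := hbr z u v (-v)
    rw [add_neg_cancel, hb0r] at h
    exact eq_neg_of_add_eq_zero_right h.symm
  have hf0 : ∀ z s, f z s 0 = 0 := by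
    intro z s
    have h := hfadd z s 0 0
    rw [add_zero] at h
    exact left_eq_add.mp h
  have hsub : ∀ z0 : ZMod n, z0 - 1 ≠ z0 := by
    intro z0 h
    exact one_ne_zero (sub_eq_self.mp h)
  refine ⟨?_, ?_, ?_, ?_, ?_, ?_, ?_, ?_, ?_⟩
  · intro z0 z hz; exact ⟨rfl, rfl⟩
  · intro z0 x hx y hy z hz
    obtain ⟨hx1, hx2⟩ := hx z hz
    obtain ⟨hy1, hy2⟩ := hy z hz
    simp [padd, hx1, hx2, hy1, hy2, hb0l]
  · intro z0 x hx z hz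
    obtain ⟨hx1, hx2⟩ := hx z hz
    simp [pneg, hx1, hx2, hb0l]
  · intro z0 g x hx z hz
    obtain ⟨hx1, hx2⟩ := hx z hz
    constructor
    · simp [padd, pmul, pneg, hx1, hf0]
    · simp only [padd, pmul, pneg, hx1, hx2, hf0, add_zero]
      rw [hbnegr]
      abel
  · intro z0 x hx y hy
    have hx' := hx (z0 - 1) (hsub z0)
    have hy' := hy (z0 - 1) (hsub z0)
    refine Prod.ext (funext fun z => ?_) (funext fun z => ?_)
    · by_cases hz : z = z0
      · subst hz
        simp [pmul, hx'.2, hy'.2, hfzero, add_comm]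
      · obtain ⟨hx1, hx2⟩ := hx z hz
        obtain ⟨hy1, hy2⟩ := hy z hz
        simp [pmul, hx1, hy1, hf0]
    · simp [pmul, add_comm]
  · intro z0 x z hz
    simp [proj, hz]
  · intro z0 x y
    refine Prod.ext (funext fun z => ?_) (funext fun z => ?_)
    · by_cases hz : z = z0 <;> simp [proj, padd, hz]
    · by_cases hz : z = z0 <;> simp [proj, padd, hz, hb0l]
  · intro x y h
    simp only at h
    refine Prod.ext (funext fun z => ?_) (funext fun z => ?_)
    · have := congrFun (congrArg Prod.fst (congrFun h z)) z
      simpa [proj] using this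
    · have := congrFun (congrArg Prod.snd (congrFun h z)) z
      simpa [proj] using this
  · intro c hc
    refine ⟨(fun z => (c z).1 z, fun z => (c z).2 z), fun z0 => ?_⟩
    refine Prod.ext (funext fun z => ?_) (funext fun z => ?_)
    · by_cases hz : z = z0
      · subst hz; simp [proj]
      · simp [proj, hz, ((hc z0) z hz).1.symm]
    · by_cases hz : z = z0
      · subst hz; simp [proj]
      · simp [proj, hz, ((hc z0) z hz).2.symm]
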